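/- Let ν ∈ ℕ₀, n ∈ L_ν, and let κ := |{i ∈ {1,...,ν} : c^{i-1}(n) is odd}|. Then 6^κ ≤ 2^ν. -/

import Mathlib

/-- The Collatz function (on ℕ; positive integers are preserved). -/
def c (n : ℕ) : ℕ := if Even n then n / 2 else 3 * n + 1

/-- The level set `L ν`: positive integers whose Collatz orbit first reaches 1 after exactly ν steps. -/
def L (ν : ℕ) : Set ℕ := {n | 0 < n ∧ c^[ν] n = 1 ∧ ∀ i < ν, c^[i] n ≠ 1}

lemma c_pos {n : ℕ} (hn : 0 < n) : 0 < c n := by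
  unfold c
  split
  · next h =>
    obtain ⟨k, rfl⟩ := h
    omega
  · omega

lemma iter_pos (ν : ℕ) {n : ℕ} (hn : 0 < n) : 0 < c^[ν] n := by
  induction ν with
  | zero => simpa
  | succ k ih =>
    rw [Function.iterate_succ_apply']
    exact c_pos ih

lemma key (ν n : ℕ) (hn : 0 < n) :
    6 ^ ((Finset.range ν).filter fun i => Odd (c^[i] n)).card * n ≤ 2 ^ ν * c^[ν] n := by
  induction ν with
  | zero => simp
  | succ k ih =>
    rw [Finset.range_add_one, Finset.filter_insert, Function.iterate_succ_apply']
    have hm := iter_pos k hn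
    set m := c^[k] n with hmdef
    by_cases h : Odd m
    · rw [if_pos h]
      rw [Finset.card_insert_of_notMem (by simp)]
      have hc : c m = 3 * m + 1 := by
        unfold c; exact if_neg (Nat.not_even_iff_odd.mpr h)
      rw [hc, pow_succ, pow_succ]
      calc 6 ^ ((Finset.range k).filter fun i => Odd (c^[i] n)).card * 6 * n
          = (6 ^ ((Finset.range k).filter fun i => Odd (c^[i] n)).card * n) * 6 := by ring
        _ ≤ (2 ^ k * m) * 6 := by exact Nat.mul_le_mul_right 6 ih
        _ = 2 ^ k * (m * 6) := by ring
        _ ≤ 2 ^ k * (2 * (3 * m + 1)) := Nat.mul_le_mul_left _ (by omega)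
        _ = 2 ^ k * 2 * (3 * m + 1) := by ring
    · rw [if_neg h]
      have he : Even m := Nat.not_odd_iff_even.mp h
      have hc : c m = m / 2 := by unfold c; rw [if_pos he]
      have h2 : 2 * (m / 2) = m := Nat.two_mul_div_two_of_even he
      rw [hc, pow_succ]
      calc 6 ^ ((Finset.range k).filter fun i => Odd (c^[i] n)).card * n
          ≤ 2 ^ k * m := ih
        _ = 2 ^ k * 2 * (m / 2) := by rw [mul_assoc, h2]

lemma card_eq (ν n : ℕ) :
    ((Finset.Icc 1 ν).filter fun i => Odd (c^[i - 1] n)).card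
      = ((Finset.range ν).filter fun i => Odd (c^[i] n)).card := by
  refine Finset.card_nbij' (fun i => i - 1) (fun j => j + 1) ?_ ?_ ?_ ?_
  · intro a ha
    simp only [Finset.coe_filter, Set.mem_setOf_eq, Finset.mem_filter, Finset.mem_Icc] at ha
    simp only [Finset.coe_filter, Set.mem_setOf_eq, Finset.mem_filter, Finset.mem_range]
    exact ⟨by omega, ha.2⟩
  · intro a ha
    simp only [Finset.coe_filter, Set.mem_setOf_eq, Finset.mem_filter, Finset.mem_range] at ha
    simp only [Finset.coe_filter, Set.mem_setOf_eq, Finset.mem_filter, Finset.mem_Icc, Nat.add_sub_cancel]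
    exact ⟨⟨by omega, by omega⟩, ha.2⟩
  · intro a ha
    simp only [Finset.coe_filter, Set.mem_setOf_eq, Finset.mem_filter, Finset.mem_Icc] at ha
    show a - 1 + 1 = a
    omega
  · intro a _
    show a + 1 - 1 = a
    omega

/-- for `n ∈ L ν` with `κ` the number of odd steps, `6^κ ≤ 2^ν`. -/
theorem stmt_12 (ν : ℕ) (n : ℕ) (hn : n ∈ L ν)
    (κ : ℕ) (hκ : κ = ((Finset.Icc 1 ν).filter fun i => Odd (c^[i - 1] n)).card) :
    6 ^ κ ≤ 2 ^ ν := by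
  obtain ⟨hpos, h1, -⟩ := hn
  have := key ν n hpos
  rw [h1, mul_one] at this
  calc 6 ^ κ = 6 ^ κ * 1 := (mul_one _).symm
    _ ≤ 6 ^ κ * n := Nat.mul_le_mul_left _ hpos
    _ ≤ 2 ^ ν := by rw [hκ, card_eq]; exact this
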